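/- Let ℍ be the algebra of real quaternions (with its conjugation as star operation), let V be a left ℍ-module that is finite and free, and let B : V → V → ℍ be a map satisfying: (a) B (v₁ + v₂) w = B v₁ w + B v₂ w and B (d • v) w = d * B v w for all v, v₁, v₂, w ∈ V and d ∈ ℍ; (b) B v w = star (B w v) for all v, w; (c) for every v there exists a real number r ≥ 0 with B v v = (r : ℍ) (the image of r under ℝ → ℍ); (d) B v v = 0 implies v = 0. Then there exist a natural number n and a basis b : Fin n → V of V over ℍ that is orthonormal for B: B (b i) (b j) = 1 if i = j and B (b i) (b j) = 0 if i ≠ j. -/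

import Mathlib

open Quaternion

universe u

theorem stmt_10_aux : ∀ (n : ℕ) (V : Type u) [AddCommGroup V] [Module ℍ[ℝ] V]
    [Module.Finite ℍ[ℝ] V]
    (B : V → V → ℍ[ℝ]),
    (∀ v₁ v₂ w : V, B (v₁ + v₂) w = B v₁ w + B v₂ w) →
    (∀ (d : ℍ[ℝ]) (v w : V), B (d • v) w = d * B v w) →
    (∀ v w : V, B v w = star (B w v)) →
    (∀ v : V, ∃ r : ℝ, 0 ≤ r ∧ B v v = (r : ℍ[ℝ])) →
    (∀ v : V, B v v = 0 → v = 0) →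
    Module.finrank ℍ[ℝ] V ≤ n →
    ∃ (m : ℕ) (b : Module.Basis (Fin m) ℍ[ℝ] V),
      (∀ i, B (b i) (b i) = 1) ∧ ∀ i j, i ≠ j → B (b i) (b j) = 0 := by
  intro n
  induction n with
  | zero =>
    intro V _ _ _ B hadd hsmul hsymm hpos hdef hrank
    have h0 : Module.finrank ℍ[ℝ] V = 0 := Nat.le_zero.mp hrank
    have : Subsingleton V := Module.finrank_zero_iff.mp h0
    exact ⟨0, Module.Basis.empty V, fun i => i.elim0, fun i => i.elim0⟩
  | succ n ih =>
    intro V _ _ _ B hadd hsmul hsymm hpos hdef hrank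
    by_cases hV : Subsingleton V
    · exact ⟨0, Module.Basis.empty V, fun i => i.elim0, fun i => i.elim0⟩
    have : Nontrivial V := not_subsingleton_iff_nontrivial.mp hV
    obtain ⟨v, hv⟩ := exists_ne (0 : V)
    -- basic consequences
    have hB0 : ∀ w : V, B 0 w = 0 := by
      intro w
      have h := hsmul 0 w w
      simpa using h
    have hsmul' : ∀ (d : ℍ[ℝ]) (v w : V), B v (d • w) = B v w * star d := by
      intro d v w
      rw [hsymm, hsmul, star_mul, ← hsymm]
    -- normalize v
    obtain ⟨r, hr0, hrv⟩ := hpos v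
    have hBvv : B v v ≠ 0 := fun h => hv (hdef v h)
    have hrne : r ≠ 0 := by rintro rfl; exact hBvv (by simpa using hrv)
    have hrpos : 0 < r := lt_of_le_of_ne hr0 (Ne.symm hrne)
    set s : ℝ := (Real.sqrt r)⁻¹ with hs
    set e : V := ((s : ℍ[ℝ])) • v with he
    have hsrs : s * r * s = 1 := by
      rw [hs]
      have hsq : Real.sqrt r * Real.sqrt r = r := Real.mul_self_sqrt hr0
      field_simp
      rw [sq, hsq]
    have hBee : B e e = 1 := by
      rw [he, hsmul, hsmul', hrv, star_coe]
      have h1 : ((s:ℍ[ℝ]) * ((r:ℍ[ℝ]) * (s:ℍ[ℝ]))) = ((s * r * s : ℝ) : ℍ[ℝ]) := by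
        push_cast
        rw [mul_assoc]
      rw [h1, hsrs]
      norm_cast
    -- the linear functional w ↦ B w e and its kernel
    let φ : V →ₗ[ℍ[ℝ]] ℍ[ℝ] :=
      { toFun := fun w => B w e
        map_add' := fun a b => hadd a b e
        map_smul' := fun d w => hsmul d w e }
    set W : Submodule ℍ[ℝ] V := LinearMap.ker φ with hW
    have hφ : ∀ w : V, φ w = B w e := fun _ => rfl
    have heW : e ∉ W := by
      intro h
      have : φ e = 0 := h
      rw [hφ, hBee] at this
      exact one_ne_zero this
    have hWlt : W < ⊤ := lt_top_iff_ne_top.mpr (fun h => heW (h ▸ Submodule.mem_top))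
    have hfd : FiniteDimensional ℍ[ℝ] V := ‹Module.Finite ℍ[ℝ] V›
    have hrankW : Module.finrank ℍ[ℝ] W ≤ n := by
      have := Submodule.finrank_lt hWlt.ne
      omega
    -- restricted form on W
    obtain ⟨m, c, hc1, hc2⟩ := ih W (fun x y => B x y)
      (fun v₁ v₂ w => hadd v₁ v₂ w)
      (fun d x y => by
        show B ((d • x : W) : V) (y : V) = d * B (x : V) (y : V)
        rw [Submodule.coe_smul, hsmul])
      (fun x y => hsymm x y)
      (fun x => hpos x)
      (fun x hx => Subtype.ext (hdef x hx))
      hrankW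
    -- members of W are orthogonal to e
    have hWe : ∀ x : W, B (x : V) e = 0 := fun x => x.2
    have heWc : ∀ x : W, B e (x : V) = 0 := by
      intro x; rw [hsymm, hWe, star_zero]
    -- build the basis
    have hli : ∀ (d : ℍ[ℝ]), ∀ x ∈ W, d • e + x = 0 → d = 0 := by
      intro d x hx h
      have hx' : B x e = 0 := hx
      have h2 : φ (d • e + x) = 0 := by rw [h]; exact map_zero φ
      rw [map_add, map_smul, hφ, hφ, hBee, hx'] at h2
      simpa using h2
    have hsp : ∀ z : V, ∃ d : ℍ[ℝ], z + d • e ∈ W := by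
      intro z
      refine ⟨-(B z e), ?_⟩
      have h2 : φ (z + (-(B z e)) • e) = 0 := by
        rw [map_add, map_smul, hφ, hφ, hBee]
        simp [smul_eq_mul]
      exact h2
    refine ⟨m + 1, Module.Basis.mkFinCons e c hli hsp, ?_, ?_⟩
    · intro i
      rw [Module.Basis.coe_mkFinCons]
      rcases Fin.eq_zero_or_eq_succ i with rfl | ⟨ii, rfl⟩
      · simpa using hBee
      · simpa using hc1 ii
    · intro i j hij
      rw [Module.Basis.coe_mkFinCons]
      rcases Fin.eq_zero_or_eq_succ i with rfl | ⟨ii, rfl⟩ <;>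
        rcases Fin.eq_zero_or_eq_succ j with rfl | ⟨jj, rfl⟩
      · exact absurd rfl hij
      · simpa using heWc (c jj)
      · simpa using hWe (c ii)
      · have hne : ii ≠ jj := fun h => hij (by rw [h])
        simpa using hc2 ii jj hne
/-- Every finite free left module over the real quaternions equipped with a
quaternionic scalar product admits an orthonormal basis. -/
theorem stmt_10 (V : Type*) [AddCommGroup V] [Module ℍ[ℝ] V]
    [Module.Finite ℍ[ℝ] V] [Module.Free ℍ[ℝ] V]
    (B : V → V → ℍ[ℝ])
    (hadd : ∀ v₁ v₂ w : V, B (v₁ + v₂) w = B v₁ w + B v₂ w)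
    (hsmul : ∀ (d : ℍ[ℝ]) (v w : V), B (d • v) w = d * B v w)
    (hsymm : ∀ v w : V, B v w = star (B w v))
    (hpos : ∀ v : V, ∃ r : ℝ, 0 ≤ r ∧ B v v = (r : ℍ[ℝ]))
    (hdef : ∀ v : V, B v v = 0 → v = 0) :
    ∃ (n : ℕ) (b : Module.Basis (Fin n) ℍ[ℝ] V),
      (∀ i, B (b i) (b i) = 1) ∧ ∀ i j, i ≠ j → B (b i) (b j) = 0 := by
  exact stmt_10_aux (Module.finrank ℍ[ℝ] V) V B hadd hsmul hsymm hpos hdef le_rfl
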